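/- Let X_sd and X_rd be i.i.d. with Fisher-Snedecor F density f(t) = Λ^m t^{m−1}/(B(m, m_s)(1+Λt)^{m+m_s}) on (0,∞) with parameters m > 0, m_s > 1 and Λ > 0. Then the CDF of S = X_sd + X_rd satisfies, near 0, F_S(z) = (Γ(m+m_s)² Λ^{2m} / (Γ(m_s)² Γ(2m+1))) · z^{2m} · ₂F₁(m + m_s, 2m; 2m+1; −Λz) · (1 + o(1)) as z → 0⁺; in particular F_S(z) ~ Γ(m+m_s)² Λ^{2m} z^{2m} / (Γ(m_s)² Γ(2m+1)) as z → 0⁺. -/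

import Mathlib

open MeasureTheory ProbabilityTheory Real Filter Asymptotics Topology
open scoped ENNReal NNReal

/-- Beta function `B(a,b) = Γ(a)Γ(b)/Γ(a+b)`. -/
noncomputable def Beta (a b : ℝ) : ℝ := Real.Gamma a * Real.Gamma b / Real.Gamma (a + b)

/-- Pochhammer symbol `(a)_n`. -/
noncomputable def poch (a : ℝ) (n : ℕ) : ℝ := (ascPochhammer ℝ n).eval a

/-- Gauss hypergeometric function `₂F₁` (series definition). -/
noncomputable def hyp2F1 (a b c x : ℝ) : ℝ :=
  ∑' n : ℕ, poch a n * poch b n / (poch c n * (n.factorial : ℝ)) * x ^ n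

/-- Generalized hypergeometric function `₃F₂` (series definition). -/
noncomputable def hyp3F2 (a1 a2 a3 b1 b2 x : ℝ) : ℝ :=
  ∑' n : ℕ, poch a1 n * poch a2 n * poch a3 n /
    (poch b1 n * poch b2 n * (n.factorial : ℝ)) * x ^ n

/-- Appell two-variable hypergeometric function `F₁` (series definition). -/
noncomputable def appellF1 (a b1 b2 c x y : ℝ) : ℝ :=
  ∑' p : ℕ × ℕ, poch a (p.1 + p.2) * poch b1 p.1 * poch b2 p.2 /
    (poch c (p.1 + p.2) * (p.1.factorial : ℝ) * (p.2.factorial : ℝ)) * x ^ p.1 * y ^ p.2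

/-- Digamma function `ψ = Γ'/Γ`. -/
noncomputable def digamma (x : ℝ) : ℝ := deriv Real.Gamma x / Real.Gamma x

/-- Fisher-Snedecor `𝓕` composite fading PDF with multipath parameter `m`,
shadowing parameter `ms` and mean power `γbar`. -/
noncomputable def fisherPDF (m ms γbar x : ℝ) : ℝ :=
  if 0 < x then
    m ^ m * (ms - 1) ^ ms * γbar ^ ms * x ^ (m - 1) /
      (Beta m ms * (m * x + (ms - 1) * γbar) ^ (m + ms))
  else 0

/-- Unit-scale Fisher-Snedecor `𝓕` PDF `Λ^m t^(m-1)/(B(m,ms)(1+Λt)^(m+ms))`. -/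
noncomputable def fisherPDFΛ (m ms Λ t : ℝ) : ℝ :=
  if 0 < t then Λ ^ m * t ^ (m - 1) / (Beta m ms * (1 + Λ * t) ^ (m + ms)) else 0

section Aux
open Set
open scoped ENNReal NNReal


lemma realBeta (u v z : ℝ) (hu : 0 < u) (hv : 0 < v) (hz : 0 < z) :
    ∫ x in (0:ℝ)..z, x ^ (u-1) * (z - x) ^ (v-1)
      = z ^ (u+v-1) * (Real.Gamma u * Real.Gamma v / Real.Gamma (u+v)) := by
  have hC := Complex.betaIntegral_scaled (u:ℂ) (v:ℂ) hz
  have hG := Complex.Gamma_mul_Gamma_eq_betaIntegral (s := (u:ℂ)) (t := (v:ℂ))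
    (by simpa using hu) (by simpa using hv)
  have hGuv : Complex.Gamma ((u:ℂ) + v) ≠ 0 := by
    rw [show ((u:ℂ) + v) = ((u + v : ℝ) : ℂ) by push_cast; ring, Complex.Gamma_ofReal]
    exact_mod_cast (Real.Gamma_pos_of_pos (by positivity)).ne'
  have hBeta : Complex.betaIntegral u v = ((Real.Gamma u * Real.Gamma v / Real.Gamma (u+v) : ℝ) : ℂ) := by
    rw [show ((u:ℂ) + v) = ((u + v : ℝ) : ℂ) by push_cast; ring] at hG hGuv
    rw [Complex.Gamma_ofReal, Complex.Gamma_ofReal, Complex.Gamma_ofReal] at hG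
    rw [Complex.Gamma_ofReal] at hGuv
    push_cast
    rw [eq_div_iff hGuv, mul_comm ((u:ℂ).betaIntegral v), ← hG]
  -- convert LHS of hC to ofReal of the real integral
  have hLHS : (∫ x in (0:ℝ)..z, (x : ℂ) ^ ((u:ℂ) - 1) * ((z : ℂ) - x) ^ ((v:ℂ) - 1))
      = ((∫ x in (0:ℝ)..z, x ^ (u-1) * (z - x) ^ (v-1) : ℝ) : ℂ) := by
    rw [← intervalIntegral.integral_ofReal]
    apply intervalIntegral.integral_congr
    intro x hx
    rw [uIcc_of_le hz.le] at hx
    show _ = ((_ : ℝ) : ℂ)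
    rw [Complex.ofReal_mul, Complex.ofReal_cpow hx.1, Complex.ofReal_cpow (by linarith [hx.2] : (0:ℝ) ≤ z - x)]
    push_cast; ring
  rw [hLHS, hBeta, show ((u:ℂ) + v - 1) = ((u + v - 1 : ℝ) : ℂ) by push_cast; ring,
    ← Complex.ofReal_cpow hz.le, ← Complex.ofReal_mul] at hC
  exact_mod_cast hC


lemma rpow_integrableOn (r z : ℝ) (hr : -1 < r) :
    IntegrableOn (fun x : ℝ => x ^ r) (Ioc 0 z) := by
  rcases le_or_gt z 0 with h | h
  · rw [Ioc_eq_empty (by exact fun h0 => absurd (h0.trans_le h) (lt_irrefl 0))]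
    · simp
  · exact (intervalIntegrable_iff_integrableOn_Ioc_of_le h.le).mp (intervalIntegral.intervalIntegrable_rpow' hr)

lemma linner (a u m : ℝ) (ha : 0 ≤ a) (hm : 0 < m) (hu : 0 ≤ u) :
    ∫⁻ t in Ioc (0:ℝ) u, ENNReal.ofReal (a * t ^ (m-1)) = ENNReal.ofReal (a * u ^ m / m) := by
  rcases eq_or_lt_of_le hu with rfl | hu
  · simp [Real.zero_rpow hm.ne']
  · rw [← ofReal_integral_eq_lintegral_ofReal
      ((rpow_integrableOn (m-1) u (by linarith)).const_mul a)
      ((ae_restrict_iff' measurableSet_Ioc).mpr (ae_of_all _ fun t ht =>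
        mul_nonneg ha (Real.rpow_nonneg ht.1.le _)))]
    congr 1
    rw [← intervalIntegral.integral_of_le hu.le, intervalIntegral.integral_const_mul,
      integral_rpow (Or.inl (by linarith))]
    rw [Real.zero_rpow (by linarith : m - 1 + 1 ≠ 0)]
    ring_nf

lemma beta_integrableOn (m z : ℝ) (hm : 0 < m) :
    IntegrableOn (fun x : ℝ => x ^ (m-1) * (z - x) ^ m) (Ioc 0 z) := by
  rcases le_or_gt z 0 with h | h
  · rw [Ioc_eq_empty (by exact fun h0 => absurd (h0.trans_le h) (lt_irrefl 0))]; simp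
  refine Integrable.mono ((rpow_integrableOn (m-1) z (by linarith)).const_mul (z ^ m)) ?_ ?_
  · exact ((measurable_id'.pow_const (m-1)).mul
      ((measurable_const.sub measurable_id').pow_const m)).aestronglyMeasurable
  · refine (ae_restrict_iff' measurableSet_Ioc).mpr (ae_of_all _ fun x hx => ?_)
    have h1 : (0:ℝ) ≤ x ^ (m-1) := Real.rpow_nonneg hx.1.le _
    have h2 : (0:ℝ) ≤ z - x := by linarith [hx.2]
    rw [Real.norm_eq_abs, Real.norm_eq_abs, abs_of_nonneg (mul_nonneg h1 (Real.rpow_nonneg h2 _)),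
      abs_of_nonneg (mul_nonneg (Real.rpow_nonneg h.le _) h1)]
    rw [mul_comm (z ^ m)]
    exact mul_le_mul_of_nonneg_left
      (Real.rpow_le_rpow h2 (by linarith [hx.1]) hm.le) h1

lemma louter (a m z : ℝ) (ha : 0 ≤ a) (hm : 0 < m) (hz : 0 < z) :
    ∫⁻ x in Ioc (0:ℝ) z, ENNReal.ofReal (a * x ^ (m-1)) * ENNReal.ofReal (a * (z-x) ^ m / m)
      = ENNReal.ofReal (a^2 * (Real.Gamma m ^ 2 / Real.Gamma (2*m+1)) * z ^ (2*m)) := by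
  have hstep : ∀ x ∈ Ioc (0:ℝ) z,
      ENNReal.ofReal (a * x ^ (m-1)) * ENNReal.ofReal (a * (z-x) ^ m / m)
        = ENNReal.ofReal ((a^2/m) * (x ^ (m-1) * (z-x) ^ m)) := by
    intro x hx
    rw [← ENNReal.ofReal_mul (mul_nonneg ha (Real.rpow_nonneg hx.1.le _))]
    congr 1; ring
  rw [setLIntegral_congr_fun measurableSet_Ioc hstep]
  rw [← ofReal_integral_eq_lintegral_ofReal ((beta_integrableOn m z hm).const_mul _)
    ((ae_restrict_iff' measurableSet_Ioc).mpr (ae_of_all _ fun x hx => by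
      have h2 : (0:ℝ) ≤ z - x := by linarith [hx.2]
      have h1 : (0:ℝ) ≤ x ^ (m-1) := Real.rpow_nonneg hx.1.le _
      have h3 : (0:ℝ) ≤ (z-x) ^ m := Real.rpow_nonneg h2 _
      positivity))]
  congr 1
  rw [integral_const_mul, ← intervalIntegral.integral_of_le hz.le]
  have hrb := realBeta m (m+1) z hm (by linarith) hz
  have : ∫ x in (0:ℝ)..z, x ^ (m-1) * (z - x) ^ m = ∫ x in (0:ℝ)..z, x ^ (m-1) * (z - x) ^ ((m+1)-1) := by
    norm_num
  rw [this, hrb, Real.Gamma_add_one hm.ne', show m + (m+1) - 1 = 2*m by ring,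
    show m + (m+1) = 2*m+1 by ring]
  have hΓ := Real.Gamma_pos_of_pos (show (0:ℝ) < 2*m+1 by linarith)
  field_simp
lemma sub_lintegral_zero {d : ℝ → ℝ≥0∞} (hd0 : ∀ t ≤ (0:ℝ), d t = 0) {u : ℝ} (hu : u ≤ 0) :
    ∫⁻ t in Iic u, d t = 0 := by
  rw [setLIntegral_congr_fun measurableSet_Iic
    ((fun t (ht : t ≤ u) => hd0 t (ht.trans hu)) :
      EqOn d (fun _ => 0) (Iic u))]
  simp

lemma iic_lintegral_eq {d : ℝ → ℝ≥0∞} (hd0 : ∀ t ≤ (0:ℝ), d t = 0) {u : ℝ} (hu : 0 ≤ u) :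
    ∫⁻ t in Iic u, d t = ∫⁻ t in Ioc 0 u, d t := by
  have hdisj : Disjoint (Iic (0:ℝ)) (Ioc 0 u) :=
    Set.disjoint_left.mpr fun t (ht : t ≤ 0) ht2 => absurd ht2.1 (not_lt.mpr ht)
  rw [← Set.Iic_union_Ioc_eq_Iic hu, lintegral_union measurableSet_Ioc hdisj,
    sub_lintegral_zero hd0 le_rfl, zero_add]

lemma prodsum (d : ℝ → ℝ≥0∞) (hd : Measurable d) (hd0 : ∀ t ≤ (0:ℝ), d t = 0)
    (z : ℝ) (hz : 0 < z) :
    ((volume.withDensity d).prod (volume.withDensity d)) {p : ℝ × ℝ | p.1 + p.2 ≤ z}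
      = ∫⁻ x in Ioc (0:ℝ) z, d x * ∫⁻ t in Ioc (0:ℝ) (z-x), d t := by
  have hS : MeasurableSet {p : ℝ × ℝ | p.1 + p.2 ≤ z} :=
    measurableSet_le (measurable_fst.add measurable_snd) measurable_const
  set ν := volume.withDensity d with hν
  have hsec : ∀ x : ℝ, Prod.mk x ⁻¹' {p : ℝ × ℝ | p.1 + p.2 ≤ z} = Iic (z - x) := by
    intro x; ext t; simp [Set.mem_Iic]; constructor <;> intro h <;> linarith
  rw [Measure.prod_apply hS]
  have hmeas : Measurable fun x => ν (Prod.mk x ⁻¹' {p : ℝ × ℝ | p.1 + p.2 ≤ z}) :=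
    measurable_measure_prodMk_left hS
  rw [hν, lintegral_withDensity_eq_lintegral_mul volume hd hmeas]
  have key : ∀ x : ℝ, (d * fun x => ν (Prod.mk x ⁻¹' {p : ℝ × ℝ | p.1 + p.2 ≤ z})) x
      = (Ioc (0:ℝ) z).indicator (fun x => d x * ∫⁻ t in Ioc (0:ℝ) (z-x), d t) x := by
    intro x
    simp only [Pi.mul_apply, hsec x, hν, withDensity_apply _ measurableSet_Iic]
    by_cases hx : x ∈ Ioc (0:ℝ) z
    · rw [Set.indicator_of_mem hx, iic_lintegral_eq hd0 (by linarith [hx.2])]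
    · rw [Set.indicator_of_notMem hx]
      rcases not_and_or.mp hx with h | h
      · rw [hd0 x (not_lt.mp h), zero_mul]
      · rw [sub_lintegral_zero hd0 (by push_neg at h; linarith), mul_zero]
  rw [funext key, lintegral_indicator measurableSet_Ioc]

lemma iter_mono (d₁ d₂ : ℝ → ℝ≥0∞) (z : ℝ) (h : ∀ t ∈ Ioc (0:ℝ) z, d₁ t ≤ d₂ t) :
    ∫⁻ x in Ioc (0:ℝ) z, d₁ x * ∫⁻ t in Ioc (0:ℝ) (z-x), d₁ t
      ≤ ∫⁻ x in Ioc (0:ℝ) z, d₂ x * ∫⁻ t in Ioc (0:ℝ) (z-x), d₂ t := by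
  refine setLIntegral_mono' measurableSet_Ioc fun x hx => mul_le_mul' (h x hx) ?_
  refine setLIntegral_mono' measurableSet_Ioc fun t ht => h t ⟨ht.1, ht.2.trans (by linarith [hx.1])⟩

lemma iter_value (a m z : ℝ) (ha : 0 ≤ a) (hm : 0 < m) (hz : 0 < z) :
    ∫⁻ x in Ioc (0:ℝ) z, ENNReal.ofReal (a * x ^ (m-1))
        * ∫⁻ t in Ioc (0:ℝ) (z-x), ENNReal.ofReal (a * t ^ (m-1))
      = ENNReal.ofReal (a^2 * (Real.Gamma m ^ 2 / Real.Gamma (2*m+1)) * z ^ (2*m)) := by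
  rw [← louter a m z ha hm hz]
  refine setLIntegral_congr_fun measurableSet_Ioc (fun x hx => ?_)
  rw [linner a (z-x) m ha hm (by linarith [hx.2])]



lemma poch_zero (a : ℝ) : poch a 0 = 1 := by simp [poch]

lemma poch_succ (a : ℝ) (n : ℕ) : poch a (n+1) = poch a n * (a + n) := by
  simp [poch, ascPochhammer_succ_eval]

lemma poch_pos {a : ℝ} (ha : 0 < a) (n : ℕ) : 0 < poch a n :=
  ascPochhammer_pos n a ha

section hypcoef
variable (A B C : ℝ)

noncomputable def hcoef (n : ℕ) : ℝ := poch A n * poch B n / (poch C n * (n.factorial : ℝ))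

variable {A B C}
variable (hA : 0 < A) (hB : 0 < B) (hBC : B ≤ C)

include hA hB hBC in
lemma hcoef_pos (n : ℕ) : 0 < hcoef A B C n := by
  have hC : 0 < C := lt_of_lt_of_le hB hBC
  exact div_pos (mul_pos (poch_pos hA n) (poch_pos hB n))
    (mul_pos (poch_pos hC n) (by positivity))

include hA hB hBC in
lemma hcoef_succ (n : ℕ) : hcoef A B C (n+1)
    = hcoef A B C n * ((A + n) * (B + n) / ((C + n) * (n+1))) := by
  have hC : 0 < C := lt_of_lt_of_le hB hBC
  have h1 : (0:ℝ) < poch C n := poch_pos hC n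
  have h2 : (0:ℝ) < (n.factorial : ℝ) := by positivity
  have h3 : (0:ℝ) < C + n := by positivity
  simp only [hcoef, poch_succ, Nat.factorial_succ, Nat.cast_mul]
  field_simp
  push_cast
  ring

include hA hB hBC in
lemma hcoef_w_summable : Summable (fun n => hcoef A B C n * (1/2)^n) := by
  have hC : 0 < C := lt_of_lt_of_le hB hBC
  apply summable_of_ratio_norm_eventually_le (r := 3/4) (by norm_num)
  filter_upwards [eventually_ge_atTop ⌈2*A⌉₊] with n hn
  have hn' : 2*A ≤ n := le_trans (Nat.le_ceil _) (by exact_mod_cast hn)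
  have hpos := hcoef_pos hA hB hBC n
  have hpos1 := hcoef_pos hA hB hBC (n+1)
  have hw : (0:ℝ) < (1/2:ℝ)^n := by positivity
  rw [Real.norm_eq_abs, Real.norm_eq_abs, abs_of_pos (by positivity),
    abs_of_pos (by positivity), hcoef_succ hA hB hBC, pow_succ]
  have hC3 : (0:ℝ) < (C + n) * (n+1) := by positivity
  have hkey : (A + n) * (B + n) / ((C + n) * (n+1)) ≤ 3/2 := by
    rw [div_le_iff₀ hC3]
    have e1 : A + n ≤ (3/2) * (n+1) := by push_cast; linarith
    have e2 : B + n ≤ C + n := by linarith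
    nlinarith [Nat.cast_nonneg (α := ℝ) n]
  calc hcoef A B C n * ((A + n) * (B + n) / ((C + n) * (n+1))) * ((1/2)^n * (1/2))
      = hcoef A B C n * (1/2)^n * ((A + n) * (B + n) / ((C + n) * (n+1)) * (1/2)) := by ring
    _ ≤ hcoef A B C n * (1/2)^n * (3/4) := by
        refine mul_le_mul_of_nonneg_left ?_ (by positivity)
        linarith
    _ = 3/4 * (hcoef A B C n * (1/2)^n) := by ring

include hA hB hBC in
lemma hyp_summable {x : ℝ} (hx : |x| ≤ 1/2) :
    Summable (fun n => hcoef A B C n * x ^ n) := by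
  refine Summable.of_norm_bounded (hcoef_w_summable hA hB hBC) fun n => ?_
  rw [Real.norm_eq_abs, abs_mul, abs_of_pos (hcoef_pos hA hB hBC n), abs_pow]
  exact mul_le_mul_of_nonneg_left (pow_le_pow_left₀ (abs_nonneg x) (by simpa using hx) n)
    (hcoef_pos hA hB hBC n).le

set_option maxHeartbeats 1000000 in
include hA hB hBC in
lemma hyp2F1_sub_one_bound {x : ℝ} (hx : |x| ≤ 1/2) :
    |hyp2F1 A B C x - 1| ≤ (2 * ∑' n, hcoef A B C (n+1) * (1/2)^(n+1)) * |x| := by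
  have hsum := hyp_summable hA hB hBC hx
  have h0 : hcoef A B C 0 = 1 := by simp [hcoef, poch_zero]
  have hts : hyp2F1 A B C x = 1 + ∑' n, hcoef A B C (n+1) * x^(n+1) := by
    rw [hyp2F1]
    have : (fun n : ℕ => poch A n * poch B n / (poch C n * (n.factorial : ℝ)) * x ^ n)
        = fun n => hcoef A B C n * x ^ n := rfl
    rw [this, hsum.tsum_eq_zero_add, h0]
    simp
  rw [hts, add_sub_cancel_left]
  have hwsum : Summable (fun n => hcoef A B C (n+1) * (1/2)^(n+1)) :=
    (summable_nat_add_iff 1).mpr (hcoef_w_summable hA hB hBC)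
  have hbound : ∀ n : ℕ, ‖hcoef A B C (n+1) * x^(n+1)‖
      ≤ 2 * (hcoef A B C (n+1) * (1/2)^(n+1)) * |x| := by
    intro n
    rw [Real.norm_eq_abs, abs_mul, abs_of_pos (hcoef_pos hA hB hBC (n+1)), abs_pow, pow_succ]
    have : |x|^n ≤ (1/2:ℝ)^n := pow_le_pow_left₀ (abs_nonneg x) (by simpa using hx) n
    calc hcoef A B C (n+1) * (|x|^n * |x|)
        ≤ hcoef A B C (n+1) * ((1/2)^n * |x|) := by
          refine mul_le_mul_of_nonneg_left ?_ (hcoef_pos hA hB hBC (n+1)).le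
          exact mul_le_mul_of_nonneg_right this (abs_nonneg x)
      _ = 2 * (hcoef A B C (n+1) * ((1/2)^n * (1/2))) * |x| := by ring
      _ = 2 * (hcoef A B C (n+1) * (1/2)^(n+1)) * |x| := by rw [← pow_succ]
  calc |∑' n, hcoef A B C (n+1) * x^(n+1)|
      ≤ ∑' n, ‖hcoef A B C (n+1) * x^(n+1)‖ := by
        exact norm_tsum_le_tsum_norm (Summable.of_nonneg_of_le (fun n => norm_nonneg _)
          hbound ((hwsum.mul_left 2).mul_right |x|))
    _ ≤ ∑' n, 2 * (hcoef A B C (n+1) * (1/2)^(n+1)) * |x| := by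
        exact Summable.tsum_le_tsum hbound (Summable.of_nonneg_of_le (fun n => norm_nonneg _)
          hbound ((hwsum.mul_left 2).mul_right |x|)) ((hwsum.mul_left 2).mul_right |x|)
    _ = (2 * ∑' n, hcoef A B C (n+1) * (1/2)^(n+1)) * |x| := by
        rw [tsum_mul_right, tsum_mul_left]

include hA hB hBC in
lemma hyp2F1_tendsto_one : Tendsto (fun x => hyp2F1 A B C x) (𝓝 0) (𝓝 1) := by
  rw [show (1:ℝ) = 1 + 0 by ring]
  have : Tendsto (fun x => hyp2F1 A B C x - 1) (𝓝 0) (𝓝 0) := by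
    apply squeeze_zero_norm' (a := fun x => (2 * ∑' n, hcoef A B C (n+1) * (1/2)^(n+1)) * |x|)
    · filter_upwards [eventually_abs_sub_lt 0 (by norm_num : (0:ℝ) < 1/2)] with x hx
      simpa using hyp2F1_sub_one_bound hA hB hBC (le_of_lt (by simpa using hx))
    · have : Tendsto (fun x : ℝ => (2 * ∑' n, hcoef A B C (n+1) * (1/2)^(n+1)) * |x|)
          (𝓝 0) (𝓝 ((2 * ∑' n, hcoef A B C (n+1) * (1/2)^(n+1)) * |(0:ℝ)|)) :=
        tendsto_const_nhds.mul ((continuous_abs.tendsto (0:ℝ)))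
      simpa using this
  have h2 := this.add_const 1
  simpa using h2
end hypcoef

end Aux

set_option maxHeartbeats 2000000 in
/-- small-argument behavior of the CDF of a sum of two i.i.d.
Fisher-Snedecor 𝓕 variates. -/
theorem fisher_sum_cdf_asymptotic {Ω : Type*} [MeasurableSpace Ω] (μ : Measure Ω)
    [IsProbabilityMeasure μ] (X Y : Ω → ℝ) (hX : Measurable X) (hY : Measurable Y)
    (hindep : IndepFun X Y μ) (m ms Λ : ℝ) (hm : 0 < m) (hms : 1 < ms) (hΛ : 0 < Λ)
    (hfx : μ.map X = volume.withDensity (fun t => ENNReal.ofReal (fisherPDFΛ m ms Λ t)))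
    (hfy : μ.map Y = volume.withDensity (fun t => ENNReal.ofReal (fisherPDFΛ m ms Λ t))) :
    (fun z => (μ {ω | X ω + Y ω ≤ z}).toReal) ~[𝓝[>] (0 : ℝ)]
        (fun z => Real.Gamma (m + ms) ^ 2 * Λ ^ (2 * m) /
          (Real.Gamma ms ^ 2 * Real.Gamma (2 * m + 1)) * z ^ (2 * m) *
          hyp2F1 (m + ms) (2 * m) (2 * m + 1) (-(Λ * z))) ∧
    (fun z => (μ {ω | X ω + Y ω ≤ z}).toReal) ~[𝓝[>] (0 : ℝ)]
        (fun z => Real.Gamma (m + ms) ^ 2 * Λ ^ (2 * m) * z ^ (2 * m) /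
          (Real.Gamma ms ^ 2 * Real.Gamma (2 * m + 1))) := by
  -- notation
  have hms0 : (0:ℝ) < ms := lt_trans one_pos hms
  have hGm := Real.Gamma_pos_of_pos hm
  have hGms := Real.Gamma_pos_of_pos hms0
  have hGmms := Real.Gamma_pos_of_pos (by linarith : (0:ℝ) < m + ms)
  have hG2m1 := Real.Gamma_pos_of_pos (by linarith : (0:ℝ) < 2*m+1)
  have hBeta : 0 < Beta m ms := div_pos (mul_pos hGm hGms) hGmms
  set a : ℝ := Λ ^ m / Beta m ms with ha_def
  have hΛm : (0:ℝ) < Λ ^ m := Real.rpow_pos_of_pos hΛ m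
  have ha : 0 < a := div_pos hΛm hBeta
  set Cm : ℝ := Real.Gamma m ^ 2 / Real.Gamma (2*m+1) with hCm_def
  have hCm : 0 < Cm := div_pos (pow_pos hGm 2) hG2m1
  set C : ℝ := Real.Gamma (m + ms) ^ 2 * Λ ^ (2 * m) / (Real.Gamma ms ^ 2 * Real.Gamma (2 * m + 1)) with hC_def
  have hΛ2m : (0:ℝ) < Λ ^ (2*m) := Real.rpow_pos_of_pos hΛ _
  have hC : 0 < C := div_pos (mul_pos (pow_pos hGmms 2) hΛ2m) (mul_pos (pow_pos hGms 2) hG2m1)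
  have hCeq : a ^ 2 * Cm = C := by
    rw [ha_def, hCm_def, hC_def, Beta, div_pow, div_pow,
      show (Λ ^ m) ^ 2 = Λ ^ (2*m) by
        rw [show 2*m = m + m by ring, Real.rpow_add hΛ]; ring]
    field_simp
  -- density facts
  set D : ℝ → ℝ≥0∞ := fun t => ENNReal.ofReal (fisherPDFΛ m ms Λ t) with hD_def
  have hDmeas : Measurable D := by
    apply ENNReal.measurable_ofReal.comp
    unfold fisherPDFΛ
    exact Measurable.ite (measurableSet_lt measurable_const measurable_id)
      (((measurable_const.mul (measurable_id'.pow_const (m-1))).div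
        (measurable_const.mul ((measurable_const.add
          (measurable_const.mul measurable_id')).pow_const (m+ms)))))
      measurable_const
  have hD0 : ∀ t ≤ (0:ℝ), D t = 0 := fun t ht => by
    simp [hD_def, fisherPDFΛ, not_lt.mpr ht]
  -- CDF as iterated integral
  have hmap : μ.map (fun ω => (X ω, Y ω)) = (μ.map X).prod (μ.map Y) :=
    (ProbabilityTheory.indepFun_iff_map_prod_eq_prod_map_map hX.aemeasurable
      hY.aemeasurable).mp hindep
  have hmain : ∀ z : ℝ, 0 < z → μ {ω | X ω + Y ω ≤ z}
      = ∫⁻ x in Set.Ioc (0:ℝ) z, D x * ∫⁻ t in Set.Ioc (0:ℝ) (z-x), D t := by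
    intro z hz
    have hS : MeasurableSet {p : ℝ × ℝ | p.1 + p.2 ≤ z} :=
      measurableSet_le (measurable_fst.add measurable_snd) measurable_const
    have e1 : {ω | X ω + Y ω ≤ z} = (fun ω => (X ω, Y ω)) ⁻¹' {p : ℝ × ℝ | p.1 + p.2 ≤ z} := rfl
    rw [e1, ← Measure.map_apply (hX.prodMk hY) hS, hmap, hfx, hfy]
    exact prodsum D hDmeas hD0 z hz
  -- pointwise density bounds on Ioc 0 z
  have hub : ∀ z : ℝ, 0 < z → ∀ t ∈ Set.Ioc (0:ℝ) z,
      D t ≤ ENNReal.ofReal (a * t ^ (m-1)) := by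
    intro z hz t ht
    apply ENNReal.ofReal_le_ofReal
    rw [fisherPDFΛ, if_pos ht.1]
    have hP : (1:ℝ) ≤ (1 + Λ * t) ^ (m + ms) := by
      have := Real.rpow_le_rpow zero_le_one (show (1:ℝ) ≤ 1 + Λ * t by nlinarith [ht.1])
        (show (0:ℝ) ≤ m + ms by linarith)
      rwa [Real.one_rpow] at this
    have hnum : (0:ℝ) ≤ Λ ^ m * t ^ (m-1) :=
      mul_nonneg hΛm.le (Real.rpow_nonneg ht.1.le _)
    calc Λ ^ m * t ^ (m-1) / (Beta m ms * (1 + Λ * t) ^ (m + ms))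
        ≤ Λ ^ m * t ^ (m-1) / (Beta m ms * 1) := by
          apply div_le_div_of_nonneg_left hnum (by linarith) (by nlinarith)
      _ = a * t ^ (m-1) := by rw [mul_one, ha_def]; ring
  have hlb : ∀ z : ℝ, 0 < z → ∀ t ∈ Set.Ioc (0:ℝ) z,
      ENNReal.ofReal (a / (1 + Λ*z) ^ (m+ms) * t ^ (m-1)) ≤ D t := by
    intro z hz t ht
    apply ENNReal.ofReal_le_ofReal
    rw [fisherPDFΛ, if_pos ht.1]
    have hKpos : (0:ℝ) < (1 + Λ*z) ^ (m+ms) := Real.rpow_pos_of_pos (by nlinarith) _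
    have hPpos : (0:ℝ) < (1 + Λ*t) ^ (m+ms) := Real.rpow_pos_of_pos (by nlinarith [ht.1]) _
    have hPK : (1 + Λ*t) ^ (m+ms) ≤ (1 + Λ*z) ^ (m+ms) :=
      Real.rpow_le_rpow (by nlinarith [ht.1]) (by nlinarith [ht.2]) (by linarith)
    have hnum : (0:ℝ) ≤ Λ ^ m * t ^ (m-1) :=
      mul_nonneg hΛm.le (Real.rpow_nonneg ht.1.le _)
    calc a / (1 + Λ*z) ^ (m+ms) * t ^ (m-1)
        = Λ ^ m * t ^ (m-1) / (Beta m ms * (1 + Λ*z) ^ (m+ms)) := by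
          rw [ha_def]; field_simp
      _ ≤ Λ ^ m * t ^ (m-1) / (Beta m ms * (1 + Λ*t) ^ (m+ms)) := by
          apply div_le_div_of_nonneg_left hnum (by positivity)
            (mul_le_mul_of_nonneg_left hPK hBeta.le)
  -- squeeze for the measure
  have hbounds : ∀ z : ℝ, 0 < z →
      (a / (1 + Λ*z) ^ (m+ms))^2 * Cm * z ^ (2*m) ≤ (μ {ω | X ω + Y ω ≤ z}).toReal ∧
      (μ {ω | X ω + Y ω ≤ z}).toReal ≤ a^2 * Cm * z ^ (2*m) := by
    intro z hz
    have hKpos : (0:ℝ) < (1 + Λ*z) ^ (m+ms) := Real.rpow_pos_of_pos (by nlinarith) _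
    have hfin : μ {ω | X ω + Y ω ≤ z} ≠ ⊤ := measure_ne_top μ _
    have hup : μ {ω | X ω + Y ω ≤ z} ≤ ENNReal.ofReal (a^2 * Cm * z ^ (2*m)) := by
      rw [hmain z hz, ← iter_value a m z ha.le hm hz]
      exact iter_mono _ _ z (hub z hz)
    have hlo : ENNReal.ofReal ((a / (1 + Λ*z) ^ (m+ms))^2 * Cm * z ^ (2*m))
        ≤ μ {ω | X ω + Y ω ≤ z} := by
      rw [hmain z hz, ← iter_value (a / (1 + Λ*z) ^ (m+ms)) m z (by positivity) hm hz]
      exact iter_mono _ _ z (hlb z hz)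
    constructor
    · exact (ENNReal.ofReal_le_iff_le_toReal hfin).mp hlo
    · exact ENNReal.toReal_le_of_le_ofReal (by positivity) hup
  -- limit of the correction factor
  have hKtend : Tendsto (fun z : ℝ => ((1 + Λ*z) ^ (m+ms) : ℝ)) (𝓝[>] 0) (𝓝 1) := by
    have h1 : ContinuousAt (fun z : ℝ => ((1 + Λ*z) ^ (m+ms) : ℝ)) 0 := by
      have hb : ContinuousAt (fun z : ℝ => 1 + Λ*z) 0 :=
        (continuous_const.add (continuous_const.mul continuous_id)).continuousAt
      exact hb.rpow_const (by left; norm_num)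
    have := (h1.tendsto).mono_left (nhdsWithin_le_nhds : 𝓝[>] (0:ℝ) ≤ 𝓝 0)
    simpa using this
  -- ratio tendsto 1
  have hrat : Tendsto (fun z => (μ {ω | X ω + Y ω ≤ z}).toReal / (C * z ^ (2*m)))
      (𝓝[>] 0) (𝓝 1) := by
    have hlow : Tendsto (fun z : ℝ => ((((1 + Λ*z) ^ (m+ms) : ℝ))^2)⁻¹) (𝓝[>] 0) (𝓝 1) := by
      have := ((hKtend.pow 2).inv₀ (by norm_num)).congr (fun z => rfl)
      simpa using this
    apply tendsto_of_tendsto_of_tendsto_of_le_of_le' hlow tendsto_const_nhds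
    · filter_upwards [self_mem_nhdsWithin] with z hz
      have hz : (0:ℝ) < z := hz
      have hzm : (0:ℝ) < z ^ (2*m) := Real.rpow_pos_of_pos hz _
      have hKpos : (0:ℝ) < (1 + Λ*z) ^ (m+ms) := Real.rpow_pos_of_pos (by nlinarith) _
      have hb := (hbounds z hz).1
      have heq : (a / (1 + Λ*z) ^ (m+ms))^2 * Cm * z ^ (2*m)
          = (C * z ^ (2*m)) * ((((1 + Λ*z) ^ (m+ms) : ℝ))^2)⁻¹ := by
        rw [← hCeq, div_pow]; field_simp
      rw [heq] at hb
      rw [le_div_iff₀ (by positivity),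
        mul_comm ((((1 + Λ*z) ^ (m+ms) : ℝ))^2)⁻¹ (C * z ^ (2*m))]
      exact hb
    · filter_upwards [self_mem_nhdsWithin] with z hz
      have hz : (0:ℝ) < z := hz
      have hzm : (0:ℝ) < z ^ (2*m) := Real.rpow_pos_of_pos hz _
      have hb := (hbounds z hz).2
      rw [hCeq] at hb
      rw [div_le_one (by positivity)]
      exact hb
  -- second equivalence
  have hv2 : ∀ z : ℝ, Real.Gamma (m + ms) ^ 2 * Λ ^ (2 * m) * z ^ (2 * m) /
      (Real.Gamma ms ^ 2 * Real.Gamma (2 * m + 1)) = C * z ^ (2*m) := by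
    intro z; rw [hC_def]; ring
  have hco2 : (fun z : ℝ => Real.Gamma (m + ms) ^ 2 * Λ ^ (2 * m) * z ^ (2 * m) /
      (Real.Gamma ms ^ 2 * Real.Gamma (2 * m + 1))) = fun z => C * z ^ (2*m) :=
    funext hv2
  have hne2 : ∀ᶠ z in 𝓝[>] (0:ℝ), C * z ^ (2*m) ≠ 0 := by
    filter_upwards [self_mem_nhdsWithin] with z hz
    have hz : (0:ℝ) < z := hz
    positivity
  have h2 : (fun z => (μ {ω | X ω + Y ω ≤ z}).toReal) ~[𝓝[>] (0:ℝ)]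
      (fun z => C * z ^ (2*m)) := by
    rw [Asymptotics.isEquivalent_iff_tendsto_one hne2]
    exact hrat
  -- first equivalence; hyp2F1 factor tendsto 1
  have hhyp : Tendsto (fun z : ℝ => hyp2F1 (m + ms) (2*m) (2*m+1) (-(Λ * z)))
      (𝓝[>] 0) (𝓝 1) := by
    have harg : Tendsto (fun z : ℝ => -(Λ * z)) (𝓝[>] 0) (𝓝 0) := by
      have : Tendsto (fun z : ℝ => -(Λ * z)) (𝓝 0) (𝓝 (-(Λ * 0))) :=
        ((continuous_const.mul continuous_id).neg).continuousAt
      simpa using this.mono_left nhdsWithin_le_nhds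
    exact (hyp2F1_tendsto_one (by linarith : (0:ℝ) < m + ms) (by linarith : (0:ℝ) < 2*m)
      (by linarith : 2*m ≤ 2*m+1)).comp harg
  have hhne : ∀ᶠ z in 𝓝[>] (0:ℝ), hyp2F1 (m + ms) (2*m) (2*m+1) (-(Λ * z)) ≠ 0 :=
    hhyp.eventually_ne one_ne_zero
  refine ⟨?_, by rw [hco2]; exact h2⟩
  -- v2 ~ v1
  have h21 : (fun z : ℝ => C * z ^ (2*m)) ~[𝓝[>] (0:ℝ)]
      (fun z => C * z ^ (2*m) * hyp2F1 (m + ms) (2*m) (2*m+1) (-(Λ * z))) := by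
    rw [Asymptotics.isEquivalent_iff_tendsto_one]
    · have hmain : Tendsto (fun z : ℝ => (hyp2F1 (m + ms) (2*m) (2*m+1) (-(Λ * z)))⁻¹)
          (𝓝[>] 0) (𝓝 1) := by
        have := hhyp.inv₀ one_ne_zero
        simpa using this
      apply hmain.congr'
      filter_upwards [hne2, hhne] with z h1 h2
      show _ = C * z ^ (2*m) / (C * z ^ (2*m) * hyp2F1 (m + ms) (2*m) (2*m+1) (-(Λ * z)))
      field_simp
      have hz : z ^ (m*2) ≠ 0 := by rw [mul_comm]; exact right_ne_zero_of_mul h1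
      have h2' : hyp2F1 (m + ms) (m * 2) (m * 2 + 1) (-(Λ * z)) ≠ 0 := by rw [mul_comm m]; exact h2
      rw [eq_div_iff (mul_ne_zero h2' hz), one_div, inv_mul_cancel_left₀ h2']
    · filter_upwards [hne2, hhne] with z h1 h2
      exact mul_ne_zero h1 h2
  exact h2.trans h21
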